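/- Let 𝒪 be the ring of integers of an imaginary quadratic field F and let q be a positive integer divisible by 4. Then there exist a positive integer a with a ≡ 1 (mod q) and an element c ∈ 𝒪 with a𝒪 + c𝒪 = 𝒪 such that the Jacobi symbol (N(c)/a) equals −1, where N(c) := c·conj(c) ∈ ℤ. (In particular, it is not true that (c·conj(c)/a) = 1 for all a ∈ 1 + qℤ and all c ∈ 𝒪 coprime to a.) -/

import Mathlib

noncomputable section

/-- ω = (d + √d)/2 where √d = i·√(-d) for the discriminant d < 0. -/
def omg (d : ℤ) : ℂ := ((d : ℂ) + Complex.I * (Real.sqrt (-(d : ℝ)) : ℝ)) / 2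

/-- d is the discriminant of an imaginary quadratic field. -/
def IsDisc (d : ℤ) : Prop :=
  d < 0 ∧ ((d % 4 = 1 ∧ Squarefree d) ∨
    (d % 4 = 0 ∧ Squarefree (d / 4) ∧ (d / 4 % 4 = 2 ∨ d / 4 % 4 = 3)))

/-- The ring of integers 𝒪 = ℤ + ℤω of the imaginary quadratic field of
discriminant d, as a subset of ℂ. -/
def Oint (d : ℤ) : Set ℂ := {z | ∃ a b : ℤ, z = (a : ℂ) + (b : ℂ) * omg d}

/-- Q is a nonzero ideal of 𝒪. -/
def IsIdealOf (d : ℤ) (Q : Set ℂ) : Prop :=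
  Q ⊆ Oint d ∧ (0 : ℂ) ∈ Q ∧ (∃ q ∈ Q, q ≠ 0) ∧
    (∀ x ∈ Q, ∀ y ∈ Q, x + y ∈ Q) ∧ (∀ r ∈ Oint d, ∀ q ∈ Q, r * q ∈ Q)

/- ## Auxiliary lemmas -/

lemma sq16 {u : ℕ} (hu : u % 2 = 1) : u^2 % 16 = 1 ∨ u^2 % 16 = 9 := by
  have h : u^2 % 16 = (u % 16)^2 % 16 := Nat.pow_mod u 2 16
  have h2 : u % 16 % 2 = 1 := by omega
  have h3 : u % 16 < 16 := Nat.mod_lt _ (by norm_num)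
  interval_cases h' : u % 16 <;> simp_all

lemma msq (x x₀ u D : ℕ) (hx : x % 16 = x₀ % 16) :
    (x^2 + u^2*D) % 16 = (x₀^2 % 16 + (u^2 % 16) * (D % 16)) % 16 := by
  conv_lhs => rw [Nat.add_mod, Nat.mul_mod, Nat.pow_mod, hx, ← Nat.pow_mod]
  omega

lemma core (q m' b₀ : ℕ) (hq : 0 < q) (hodd : m' % 2 = 1) (hco : Nat.Coprime (8*q) m')
    (hjb : jacobiSym (b₀ : ℤ) m' = -1) :
    ∃ a : ℕ, 0 < a ∧ a % (8*q) = 1 ∧ jacobiSym (m' : ℤ) a = -1 ∧ jacobiSym 2 a = 1 := by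
  obtain ⟨a, ha1, hab⟩ := Nat.chineseRemainder hco 1 b₀
  have h8q : 1 < 8*q := by omega
  have haq : a % (8*q) = 1 := by
    have : a % (8*q) = 1 % (8*q) := ha1; rwa [Nat.mod_eq_of_lt h8q] at this
  have ha8 : a % 8 = 1 := by
    have h : a % 8 = 1 % 8 := Nat.ModEq.of_dvd ⟨q, rfl⟩ ha1
    omega
  have ha4 : a % 4 = 1 := by omega
  have hapos : 0 < a := by omega
  have haodd : Odd a := by rw [Nat.odd_iff]; omega
  have hm'odd : Odd m' := by rw [Nat.odd_iff]; exact hodd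
  refine ⟨a, hapos, haq, ?_, ?_⟩
  · rw [← jacobiSym.quadratic_reciprocity_one_mod_four ha4 hm'odd]
    have : ((a : ℤ)) % m' = ((b₀ : ℤ)) % m' := by exact_mod_cast (hab : a % m' = b₀ % m')
    rw [jacobiSym.mod_left' this, hjb]
  · rw [jacobiSym.at_two haodd, ZMod.χ₈_nat_eq_if_mod_eight]
    simp [ha8, show a % 2 = 1 by omega]

lemma jneg (n : ℕ) (hn : n % 4 = 3) : jacobiSym ((n - 1 : ℕ) : ℤ) n = -1 := by
  have hme : ((n-1:ℕ):ℤ) % n = (-1) % n := by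
    have h1 : ((n-1:ℕ):ℤ) = -1 + (n:ℤ)*1 := by
      push_cast [Nat.cast_sub (show 1 ≤ n by omega)]; ring
    rw [h1, Int.add_mul_emod_self_left]
  rw [jacobiSym.mod_left' hme, jacobiSym.at_neg_one (by rw [Nat.odd_iff]; omega),
    ZMod.χ₄_nat_eq_if_mod_four, if_neg (by omega), if_neg (by omega)]

lemma key (D q : ℕ) (hD : D % 4 = 1 ∨ D % 4 = 2 ∨ D % 4 = 3) (hq : 0 < q) :
    ∃ a x u : ℕ, 0 < a ∧ a % (8*q) = 1 ∧
      jacobiSym ((x^2 + u^2*D : ℕ) : ℤ) a = -1 := by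
  have hQ0 : 8*q ≠ 0 := by omega
  obtain ⟨t, u, hQeq, hu_nd⟩ : ∃ t u : ℕ, 2^t * u = 8*q ∧ ¬ 2 ∣ u :=
    ⟨(8*q).factorization 2, _, Nat.ordProj_mul_ordCompl_eq_self (8*q) 2,
      Nat.not_dvd_ordCompl Nat.prime_two hQ0⟩
  have hu_odd : u % 2 = 1 := by omega
  have hu2 := sq16 hu_odd
  obtain ⟨x₀, hx₀⟩ : ∃ x₀ : ℕ, ∀ x : ℕ, x % 16 = x₀ % 16 →
      ((x^2+u^2*D) % 4 = 3 ∨ (x^2+u^2*D) % 8 = 6 ∨ (x^2+u^2*D) % 16 = 10) := by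
    rcases hD with h | h | h
    · have h8 : D % 8 = 1 ∨ D % 8 = 5 := by omega
      rcases h8 with h8 | h8
      · have hD16 : D % 16 = 1 ∨ D % 16 = 9 := by omega
        rcases hu2 with hu' | hu' <;> rcases hD16 with h16 | h16
        · exact ⟨3, fun x hx => by
            have hmm := msq x 3 u D hx; rw [hu', h16] at hmm; right; right; omega⟩
        · exact ⟨1, fun x hx => by
            have hmm := msq x 1 u D hx; rw [hu', h16] at hmm; right; right; omega⟩
        · exact ⟨1, fun x hx => by
            have hmm := msq x 1 u D hx; rw [hu', h16] at hmm; right; right; omega⟩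
        · exact ⟨3, fun x hx => by
            have hmm := msq x 3 u D hx; rw [hu', h16] at hmm; right; right; omega⟩
      · exact ⟨1, fun x hx => by
          have hmm := msq x 1 u D hx
          have h16 : D % 16 = 5 ∨ D % 16 = 13 := by omega
          right; left
          rcases hu2 with hu' | hu' <;> rcases h16 with h16 | h16 <;>
            rw [hu', h16] at hmm <;> omega⟩
    · exact ⟨1, fun x hx => by
        have hmm := msq x 1 u D hx
        have h16 : D % 16 = 2 ∨ D % 16 = 6 ∨ D % 16 = 10 ∨ D % 16 = 14 := by omega
        left
        rcases hu2 with hu' | hu' <;> rcases h16 with h16 | h16 | h16 | h16 <;>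
          rw [hu', h16] at hmm <;> omega⟩
    · exact ⟨0, fun x hx => by
        have hmm := msq x 0 u D hx
        have h16 : D % 16 = 3 ∨ D % 16 = 7 ∨ D % 16 = 11 ∨ D % 16 = 15 := by omega
        left
        rcases hu2 with hu' | hu' <;> rcases h16 with h16 | h16 | h16 | h16 <;>
          rw [hu', h16] at hmm <;> omega⟩
  have h2u : Nat.Coprime 2 u := (Nat.prime_two.coprime_iff_not_dvd).mpr (by omega)
  have hco16 : Nat.Coprime 16 u := by
    have := Nat.Coprime.pow_left 4 h2u; norm_num at this; exact this
  obtain ⟨x, hx16, hxu⟩ := Nat.chineseRemainder hco16 x₀ 1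
  set m := x^2 + u^2*D with hm
  have hmod := hx₀ x (by
    have : x % 16 = x₀ % 16 := hx16
    omega)
  have hm_u : m % u = 1 % u := by
    have h1 : x^2 ≡ 1^2 [MOD u] := (hxu : x ≡ 1 [MOD u]).pow 2
    have h2 : u^2*D ≡ 0 [MOD u] := (Nat.modEq_zero_iff_dvd).mpr ⟨u*D, by ring⟩
    have h3 := h1.add h2
    exact (by simpa using h3 : x^2 + u^2*D ≡ 1 [MOD u])
  have hmpos : 0 < m := by rcases hmod with h|h|h <;> omega
  have hcoQ : ∀ m' : ℕ, m' % 2 = 1 → m' ∣ m → Nat.Coprime (8*q) m' := by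
    intro m' hodd' hdvd
    have hudvd : u ∣ m - 1 := by
      have h1 : 1 ≡ m [MOD u] := hm_u.symm
      exact (Nat.modEq_iff_dvd' (by omega)).mp h1
    have hum' : Nat.Coprime u m' := by
      have hg1 : Nat.gcd u m' ∣ m - 1 := dvd_trans (Nat.gcd_dvd_left u m') hudvd
      have hg2 : Nat.gcd u m' ∣ m := (Nat.gcd_dvd_right u m').trans hdvd
      have hg3 : Nat.gcd u m' ∣ 1 := by
        have := Nat.dvd_sub hg2 hg1
        simpa [show m - (m-1) = 1 by omega] using this
      exact Nat.dvd_one.mp hg3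
    have h2m' : Nat.Coprime 2 m' := (Nat.prime_two.coprime_iff_not_dvd).mpr (by omega)
    rw [← hQeq]
    exact Nat.Coprime.mul (h2m'.pow_left t) hum'
  rcases hmod with h3 | h6 | h10
  · obtain ⟨a, hap, haq, hj, _⟩ := core q m (m-1) hq (by omega) (hcoQ m (by omega) dvd_rfl)
      (jneg m h3)
    exact ⟨a, x, u, hap, haq, hj⟩
  · set m' := m / 2 with hm'
    have hm2 : m = 2*m' := by omega
    have hm'4 : m' % 4 = 3 := by omega
    obtain ⟨a, hap, haq, hj, hj2⟩ := core q m' (m'-1) hq (by omega)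
      (hcoQ m' (by omega) ⟨2, by omega⟩) (jneg m' hm'4)
    refine ⟨a, x, u, hap, haq, ?_⟩
    have hcast : ((m : ℕ) : ℤ) = 2 * (m' : ℕ) := by exact_mod_cast hm2
    rw [hcast, jacobiSym.mul_left, hj2, hj]; ring
  · set m' := m / 2 with hm'
    have hm2 : m = 2*m' := by omega
    have hm'8 : m' % 8 = 5 := by omega
    have hjb : jacobiSym ((2:ℕ) : ℤ) m' = -1 := by
      rw [show ((2:ℕ):ℤ) = 2 by norm_num, jacobiSym.at_two (by rw [Nat.odd_iff]; omega),
        ZMod.χ₈_nat_eq_if_mod_eight, if_neg (by omega), if_neg (by omega)]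
    obtain ⟨a, hap, haq, hj, hj2⟩ := core q m' 2 hq (by omega)
      (hcoQ m' (by omega) ⟨2, by omega⟩) hjb
    refine ⟨a, x, u, hap, haq, ?_⟩
    have hcast : ((m : ℕ) : ℤ) = 2 * (m' : ℕ) := by exact_mod_cast hm2
    rw [hcast, jacobiSym.mul_left, hj2, hj]; ring

lemma star_omg (d : ℤ) : star (omg d) = (d:ℂ) - omg d := by
  unfold omg
  simp only [Complex.star_def, map_div₀, map_add, map_mul, Complex.conj_I,
    Complex.conj_ofReal, map_intCast, map_ofNat]
  ring

lemma norm_form (d : ℤ) (hdneg : d < 0) (h4 : (4:ℤ) ∣ d^2 - d) (A B : ℤ) :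
    ((A:ℂ) + B * omg d) * star ((A:ℂ) + B * omg d)
      = ((A^2 + A*B*d + B^2*((d^2-d)/4) : ℤ) : ℂ) := by
  have hr2 : ((Real.sqrt (-(d:ℝ)) : ℝ) : ℂ)^2 = -(d:ℂ) := by
    rw [← Complex.ofReal_pow, Real.sq_sqrt (by
      have : (d:ℝ) ≤ 0 := by exact_mod_cast hdneg.le
      linarith)]
    push_cast; ring
  have hn4 : (((d^2-d)/4 : ℤ) : ℂ) * 4 = ((d:ℂ)^2 - (d:ℂ)) := by
    have h := Int.ediv_mul_cancel h4
    exact_mod_cast congrArg (Int.cast : ℤ → ℂ) h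
  have hI : (Complex.I)^2 = -1 := Complex.I_sq
  simp only [star_add, star_mul', star_intCast, star_omg]
  unfold omg
  push_cast
  linear_combination (-(B:ℂ)^2/4) * ((Real.sqrt (-(d:ℝ)) : ℝ) : ℂ)^2 * hI
    + ((B:ℂ)^2/4) * hr2 - (1/4 : ℂ) * (B:ℂ)^2 * hn4

/-- for every positive q divisible by 4 there exist a ≡ 1 mod q and
c ∈ 𝒪 coprime to a with Jacobi symbol (N(c)/a) = -1. -/
theorem stmt19 (d : ℤ) (hd : IsDisc d) (q : ℕ) (hq : 0 < q) (h4 : 4 ∣ q) :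
    ∃ a : ℕ, 0 < a ∧ a % q = 1 ∧
      ∃ c ∈ Oint d,
        (∃ x ∈ Oint d, ∃ y ∈ Oint d, (a : ℂ) * x + c * y = 1) ∧
        ∃ Nc : ℤ, (Nc : ℂ) = c * star c ∧ jacobiSym Nc a = -1 := by
  obtain ⟨hdneg, hcase⟩ := hd
  have h4d : (4:ℤ) ∣ d^2 - d := by
    rcases hcase with ⟨h1, -⟩ | ⟨h0, -, -⟩
    · obtain ⟨k, hk⟩ : ∃ k, d = 4*k+1 := ⟨(d-1)/4, by omega⟩
      exact ⟨4*k^2+k, by rw [hk]; ring⟩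
    · obtain ⟨k, hk⟩ : ∃ k, d = 4*k := ⟨d/4, by omega⟩
      exact ⟨4*k^2-k, by rw [hk]; ring⟩
  obtain ⟨D, hD4, hDreal⟩ : ∃ D : ℕ,
      (D % 4 = 1 ∨ D % 4 = 2 ∨ D % 4 = 3) ∧
      ∀ x u : ℕ, ∃ A B : ℤ,
        A^2 + A*B*d + B^2*((d^2-d)/4) = (x:ℤ)^2 + (u:ℤ)^2 * (D:ℤ) := by
    rcases hcase with ⟨h1, -⟩ | ⟨h0, -, h2⟩
    · obtain ⟨k, hk⟩ : ∃ k, d = 4*k+1 := ⟨(d-1)/4, by omega⟩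
      refine ⟨(-d).toNat, by omega, fun x u => ⟨(x:ℤ) - u*d, 2*u, ?_⟩⟩
      have hdiv : (d^2 - d)/4 = 4*k^2+k := by
        have h : d^2 - d = 4*(4*k^2+k) := by rw [hk]; ring
        rw [h, Int.mul_ediv_cancel_left _ (by norm_num)]
      have hDz : (((-d).toNat : ℤ)) = -d := by omega
      rw [hdiv, hDz, hk]; ring
    · obtain ⟨k, hk⟩ : ∃ k, d = 4*k := ⟨d/4, by omega⟩
      have hk4 : d / 4 = k := by omega
      refine ⟨(-(d/4)).toNat, by rcases h2 with h2 | h2 <;> omega,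
        fun x u => ⟨(x:ℤ) - 2*u*k, u, ?_⟩⟩
      have hdiv : (d^2 - d)/4 = 4*k^2-k := by
        have h : d^2 - d = 4*(4*k^2-k) := by rw [hk]; ring
        rw [h, Int.mul_ediv_cancel_left _ (by norm_num)]
      have hDz : ((((-(d/4)).toNat) : ℤ)) = -k := by omega
      rw [hdiv, hDz, hk]; ring
  obtain ⟨a, x, u, hapos, ha8q, hjac⟩ := key D q hD4 hq
  have haq : a % q = 1 := by
    have h := Nat.mod_mod_of_dvd a (⟨8, by ring⟩ : q ∣ 8*q)
    rw [ha8q] at h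
    have : 1 % q = 1 := Nat.mod_eq_of_lt (by omega)
    omega
  refine ⟨a, hapos, haq, ?_⟩
  obtain ⟨A, B, hAB⟩ := hDreal x u
  set c : ℂ := (A:ℂ) + (B:ℂ) * omg d with hc
  have hOc : c ∈ Oint d := ⟨A, B, rfl⟩
  have hnorm := norm_form d hdneg h4d A B
  set Nc : ℤ := A^2 + A*B*d + B^2*((d^2-d)/4) with hNcdef
  have hNcm : (Nc : ℤ) = ((x^2+u^2*D : ℕ) : ℤ) := by push_cast; exact hAB
  have hjacNc : jacobiSym Nc a = -1 := by rw [hNcm]; exact hjac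
  have hgcd : Int.gcd (Nc : ℤ) (a : ℤ) = 1 := by
    by_contra hne
    have hz : jacobiSym Nc a = 0 := by
      have : NeZero a := ⟨by omega⟩
      exact jacobiSym.eq_zero_iff_not_coprime.mpr hne
    rw [hz] at hjacNc; norm_num at hjacNc
  obtain ⟨w, v, hwv⟩ := Int.isCoprime_iff_gcd_eq_one.mpr hgcd
  have hws : c * star c = (Nc : ℂ) := hnorm
  refine ⟨c, hOc, ⟨(v:ℂ), ⟨v, 0, by simp⟩, (w:ℂ) * star c, ⟨w*(A + B*d), -(w*B), ?_⟩, ?_⟩,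
    Nc, hws.symm, hjacNc⟩
  · rw [hc]
    simp only [star_add, star_mul', star_intCast, star_omg]
    push_cast
    ring
  · have h1 : ((w * Nc + v * (a:ℤ) : ℤ) : ℂ) = 1 := by
      rw [hwv]; norm_num
    push_cast at h1
    calc (a:ℂ) * (v:ℂ) + c * ((w:ℂ) * star c)
        = (w:ℂ) * (c * star c) + (v:ℂ) * (a:ℂ) := by ring
      _ = 1 := by rw [hws]; exact_mod_cast h1
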